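/- arXiv:1512.08357 — 2 statements merged into one kernel-verified Lean document; each statement's English description precedes it below -/
import Mathlib

section
/- Suppose α is three times differentiable with α' > 0 on (a,b) and α' satisfies Kummer's equation q(t) − (α'(t))² − (1/2)(α'''(t)/α'(t)) + (3/4)(α''(t)/α'(t))² = 0 on (a,b). Then both u(t) = cos(α(t))/√(α'(t)) and v(t) = sin(α(t))/√(α'(t)) solve y'' + q·y = 0 on (a,b). -/
lemma aux_kummer (a b : ℝ) (q α : ℝ → ℝ)
    (hα : ContDiff ℝ 3 α)
    (hpos : ∀ t ∈ Set.Ioo a b, 0 < deriv α t)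
    (hkummer : ∀ t ∈ Set.Ioo a b,
      q t - (deriv α t) ^ 2
        - (1 / 2) * (deriv (deriv (deriv α)) t / deriv α t)
        + (3 / 4) * (deriv (deriv α) t / deriv α t) ^ 2 = 0)
    (F G : ℝ → ℝ)
    (hFG : ∀ x, HasDerivAt F (G x) x)
    (hGF : ∀ x, HasDerivAt G (-F x) x)
    (w : ℝ → ℝ) (hw : ∀ x, w x = F (α x) / Real.sqrt (deriv α x)) :
    ∀ t ∈ Set.Ioo a b, deriv (deriv w) t + q t * w t = 0 := by
  have hαd : Differentiable ℝ α := hα.differentiable (by norm_num)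
  have h1 : ContDiff ℝ 2 (deriv α) :=
    (contDiff_succ_iff_deriv.mp (show ContDiff ℝ (2+1) α by norm_num [hα])).2.2
  have h2 : ContDiff ℝ 1 (deriv (deriv α)) :=
    (contDiff_succ_iff_deriv.mp (show ContDiff ℝ (1+1) (deriv α) by norm_num [h1])).2.2
  have hd1 : Differentiable ℝ (deriv α) := h1.differentiable (by norm_num)
  have hd2 : Differentiable ℝ (deriv (deriv α)) := h2.differentiable one_ne_zero
  -- the first derivative formula
  set h : ℝ → ℝ := fun x => G (α x) * Real.sqrt (deriv α x)
      - F (α x) * deriv (deriv α) x / (2 * Real.sqrt (deriv α x) ^ 3) with hh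
  have key : ∀ x ∈ Set.Ioo a b, deriv w x = h x := by
    intro x hx
    have hp := hpos x hx
    have hs0 : Real.sqrt (deriv α x) ≠ 0 := by positivity
    have hsq : HasDerivAt (fun y => Real.sqrt (deriv α y))
        (deriv (deriv α) x / (2 * Real.sqrt (deriv α x))) x := by
      have := (Real.hasDerivAt_sqrt (ne_of_gt hp)).comp x (hd1 x).hasDerivAt
      exact this.congr_deriv (by ring)
    have hF : HasDerivAt (fun y => F (α y)) (G (α x) * deriv α x) x :=
      (hFG (α x)).comp x (hαd x).hasDerivAt
    have hwd : HasDerivAt w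
        ((G (α x) * deriv α x * Real.sqrt (deriv α x)
          - F (α x) * (deriv (deriv α) x / (2 * Real.sqrt (deriv α x))))
          / Real.sqrt (deriv α x) ^ 2) x := by
      have := hF.div hsq hs0
      have hwe : w = fun y => F (α y) / Real.sqrt (deriv α y) := funext hw
      rw [hwe]; exact this
    rw [hwd.deriv, hh]
    have hsd : Real.sqrt (deriv α x) ^ 2 = deriv α x := Real.sq_sqrt hp.le
    set s := Real.sqrt (deriv α x) with hs
    have hs1 : (0:ℝ) < s := Real.sqrt_pos.mpr hp
    rw [← hsd]
    field_simp
    ring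
  intro t ht
  have hp := hpos t ht
  have hs0 : Real.sqrt (deriv α t) ≠ 0 := by positivity
  have hsq : HasDerivAt (fun y => Real.sqrt (deriv α y))
      (deriv (deriv α) t / (2 * Real.sqrt (deriv α t))) t := by
    have := (Real.hasDerivAt_sqrt (ne_of_gt hp)).comp t (hd1 t).hasDerivAt
    exact this.congr_deriv (by ring)
  have hF : HasDerivAt (fun y => F (α y)) (G (α t) * deriv α t) t :=
    (hFG (α t)).comp t (hαd t).hasDerivAt
  have hG : HasDerivAt (fun y => G (α y)) (-F (α t) * deriv α t) t :=
    (hGF (α t)).comp t (hαd t).hasDerivAt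
  -- derivative of h at t
  have hterm1 : HasDerivAt (fun y => G (α y) * Real.sqrt (deriv α y))
      (-F (α t) * deriv α t * Real.sqrt (deriv α t)
        + G (α t) * (deriv (deriv α) t / (2 * Real.sqrt (deriv α t)))) t :=
    hG.mul hsq
  have hnum : HasDerivAt (fun y => F (α y) * deriv (deriv α) y)
      (G (α t) * deriv α t * deriv (deriv α) t
        + F (α t) * deriv (deriv (deriv α)) t) t :=
    hF.mul (hd2 t).hasDerivAt
  have hden : HasDerivAt (fun y => 2 * Real.sqrt (deriv α y) ^ 3)
      (2 * (3 * Real.sqrt (deriv α t) ^ 2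
        * (deriv (deriv α) t / (2 * Real.sqrt (deriv α t))))) t := by
    have := (hsq.pow 3).const_mul 2
    exact this.congr_deriv (by norm_num)
  have hden0 : 2 * Real.sqrt (deriv α t) ^ 3 ≠ 0 := by positivity
  have hH : HasDerivAt h
      ((-F (α t) * deriv α t * Real.sqrt (deriv α t)
        + G (α t) * (deriv (deriv α) t / (2 * Real.sqrt (deriv α t))))
       - ((G (α t) * deriv α t * deriv (deriv α) t
            + F (α t) * deriv (deriv (deriv α)) t) * (2 * Real.sqrt (deriv α t) ^ 3)
          - F (α t) * deriv (deriv α) t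
            * (2 * (3 * Real.sqrt (deriv α t) ^ 2
              * (deriv (deriv α) t / (2 * Real.sqrt (deriv α t))))))
         / (2 * Real.sqrt (deriv α t) ^ 3) ^ 2) t :=
    hterm1.sub (hnum.div hden hden0)
  have hev : deriv w =ᶠ[nhds t] h :=
    Filter.eventuallyEq_of_mem (isOpen_Ioo.mem_nhds ht) key
  rw [hev.deriv_eq, hH.deriv, hw t]
  have hsd : Real.sqrt (deriv α t) ^ 2 = deriv α t := Real.sq_sqrt hp.le
  have hq' : q t = (deriv α t) ^ 2
      + (1 / 2) * (deriv (deriv (deriv α)) t / deriv α t)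
      - (3 / 4) * (deriv (deriv α) t / deriv α t) ^ 2 := by
    have := hkummer t ht; linarith
  rw [hq']
  set s := Real.sqrt (deriv α t) with hs
  have hs1 : (0:ℝ) < s := Real.sqrt_pos.mpr hp
  rw [← hsd]
  have hs0' : s ≠ 0 := ne_of_gt hs1
  field_simp
  ring

theorem stmt2 (a b : ℝ) (hab : a < b) (q α : ℝ → ℝ)
    (hq : ContinuousOn q (Set.Ioo a b))
    (hα : ContDiff ℝ 3 α)
    (hpos : ∀ t ∈ Set.Ioo a b, 0 < deriv α t)
    (hkummer : ∀ t ∈ Set.Ioo a b,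
      q t - (deriv α t) ^ 2
        - (1 / 2) * (deriv (deriv (deriv α)) t / deriv α t)
        + (3 / 4) * (deriv (deriv α) t / deriv α t) ^ 2 = 0)
    (u v : ℝ → ℝ)
    (hu : ∀ t, u t = Real.cos (α t) / Real.sqrt (deriv α t))
    (hv : ∀ t, v t = Real.sin (α t) / Real.sqrt (deriv α t)) :
    ∀ t ∈ Set.Ioo a b,
      deriv (deriv u) t + q t * u t = 0 ∧
      deriv (deriv v) t + q t * v t = 0 := by
  intro t ht
  constructor
  · exact aux_kummer a b q α hα hpos hkummer Real.cos (fun x => -Real.sin x)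
      (fun x => Real.hasDerivAt_cos x) (fun x => by exact (Real.hasDerivAt_sin x).neg)
      u hu t ht
  · exact aux_kummer a b q α hα hpos hkummer Real.sin Real.cos
      (fun x => Real.hasDerivAt_sin x) (fun x => by simpa using Real.hasDerivAt_cos x)
      v hv t ht
end

section
/- Suppose y(t) = d₁ sin(α(t) + d₂)/√(α'(t)) on [a,b] with d₁ ≠ 0, α strictly increasing with α' > 0, and 0 < d₂ ≤ π. Then the number of roots of y in [a,b] equals the number of integers k with α(a) + d₂ ≤ kπ ≤ α(b) + d₂, which is ⌊(α(b)+d₂)/π⌋ − ⌈(α(a)+d₂)/π⌉ + 1 when this quantity is nonnegative. -/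
theorem stmt19 (a b : ℝ) (hab : a < b) (α y : ℝ → ℝ) (d₁ d₂ : ℝ)
    (hd₁ : d₁ ≠ 0) (hd₂ : 0 < d₂ ∧ d₂ ≤ Real.pi)
    (hα : ContDiff ℝ 1 α)
    (hmono : StrictMonoOn α (Set.Icc a b))
    (hpos : ∀ t ∈ Set.Icc a b, 0 < deriv α t)
    (hy : ∀ t, y t = d₁ * Real.sin (α t + d₂) / Real.sqrt (deriv α t)) :
    {t ∈ Set.Icc a b | y t = 0}.ncard =
      {k : ℤ | α a + d₂ ≤ k * Real.pi ∧ k * Real.pi ≤ α b + d₂}.ncard ∧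
    (0 ≤ ⌊(α b + d₂) / Real.pi⌋ - ⌈(α a + d₂) / Real.pi⌉ + 1 →
      ({t ∈ Set.Icc a b | y t = 0}.ncard : ℤ) =
        ⌊(α b + d₂) / Real.pi⌋ - ⌈(α a + d₂) / Real.pi⌉ + 1) := by
  have hπ := Real.pi_pos
  set m := ⌈(α a + d₂) / Real.pi⌉ with hm
  set n := ⌊(α b + d₂) / Real.pi⌋ with hn
  set S := {t ∈ Set.Icc a b | y t = 0} with hS
  -- characterize roots
  have hroot : ∀ t ∈ Set.Icc a b, (y t = 0 ↔ ∃ k : ℤ, α t + d₂ = k * Real.pi) := by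
    intro t ht
    rw [hy t]
    have hs : Real.sqrt (deriv α t) ≠ 0 := by
      rw [Real.sqrt_ne_zero']; exact hpos t ht
    rw [div_eq_zero_iff]
    constructor
    · rintro (h | h)
      · rcases mul_eq_zero.1 h with h | h
        · exact absurd h hd₁
        · obtain ⟨k, hk⟩ := Real.sin_eq_zero_iff.1 h
          exact ⟨k, hk.symm⟩
      · exact absurd h hs
    · rintro ⟨k, hk⟩
      left
      rw [hk, Real.sin_int_mul_pi, mul_zero]
  set g : ℝ → ℤ := fun t => round ((α t + d₂) / Real.pi) with hg
  have hgspec : ∀ t ∈ S, α t + d₂ = g t * Real.pi := by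
    intro t ht
    obtain ⟨ht1, ht2⟩ := ht
    obtain ⟨k, hk⟩ := (hroot t ht1).1 ht2
    have hdiv : (α t + d₂) / Real.pi = (k : ℝ) := by
      rw [hk]; field_simp
    have : g t = k := by simp [hg, hdiv]
    rw [this, ← hk]
  have hinj : Set.InjOn g S := by
    intro t₁ h₁ t₂ h₂ he
    have e1 := hgspec t₁ h₁
    have e2 := hgspec t₂ h₂
    rw [he] at e1
    have : α t₁ = α t₂ := by linarith
    exact hmono.injOn h₁.1 h₂.1 this
  have himg : g '' S = Set.Icc m n := by
    ext k
    simp only [Set.mem_image, Set.mem_Icc]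
    constructor
    · rintro ⟨t, ht, rfl⟩
      have e := hgspec t ht
      have hta : α a ≤ α t := by
        rcases eq_or_lt_of_le ht.1.1 with h | h
        · rw [h]
        · exact (hmono (Set.left_mem_Icc.2 hab.le) ht.1 h).le
      have htb : α t ≤ α b := by
        rcases eq_or_lt_of_le ht.1.2 with h | h
        · rw [h]
        · exact (hmono ht.1 (Set.right_mem_Icc.2 hab.le) h).le
      constructor
      · rw [hm, Int.ceil_le, div_le_iff₀ hπ]
        linarith
      · rw [hn, Int.le_floor, le_div_iff₀ hπ]
        linarith
    · rintro ⟨hk1, hk2⟩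
      have h1 : α a ≤ k * Real.pi - d₂ := by
        rw [hm, Int.ceil_le, div_le_iff₀ hπ] at hk1
        linarith
      have h2 : k * Real.pi - d₂ ≤ α b := by
        rw [hn, Int.le_floor, le_div_iff₀ hπ] at hk2
        linarith
      obtain ⟨t, ht, hαt⟩ :=
        intermediate_value_Icc hab.le hα.continuous.continuousOn ⟨h1, h2⟩
      have hzt : y t = 0 := (hroot t ht).2 ⟨k, by rw [hαt]; ring⟩
      refine ⟨t, ⟨ht, hzt⟩, ?_⟩
      have hdiv : (α t + d₂) / Real.pi = (k : ℝ) := by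
        rw [hαt]; field_simp; ring
      simp [hg, hdiv]
  have hcard : (Set.Icc m n).ncard = (n + 1 - m).toNat := by
    rw [← Finset.coe_Icc, Set.ncard_coe_finset, Int.card_Icc]
  have hSn : S.ncard = (n + 1 - m).toNat := by
    rw [← Set.ncard_image_of_injOn hinj, himg, hcard]
  have hKeq : {k : ℤ | α a + d₂ ≤ k * Real.pi ∧ k * Real.pi ≤ α b + d₂} = Set.Icc m n := by
    ext k
    simp only [Set.mem_setOf_eq, Set.mem_Icc, hm, hn, Int.ceil_le, Int.le_floor,
      div_le_iff₀ hπ, le_div_iff₀ hπ]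
  constructor
  · rw [hKeq, hcard, hSn]
  · intro h
    rw [hSn]
    omega
end
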